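/- Let B be a Banach space and L : B → B a bounded operator. Suppose for some t_0 and all t > 3t_0 the operator L^t factors as L^t = A ∘ M^{t−2t_0} ∘ A' where A' : B → B', A : B' → B are bounded operators between Banach spaces and M : B' → B' is a bounded operator whose essential spectral radius is at most ρ < 1 (and A ∘ M^s ∘ A' = L^{s+2t_0} for all s ≥ 0 as operators on B, with L^{s}L^{s'} = L^{s+s'}). Then the essential spectral radius of L^t on B is at most ρ^t for every t, i.e. ρ_ess(L^t) ≤ ρ^t; in particular ρ_ess(L) ≤ ρ. -/

import Mathlib

/-- The distance from an operator to the compact operators (the Calkin seminorm). -/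
noncomputable def essNorm {B : Type*} [NormedAddCommGroup B] [NormedSpace ℝ B]
    (T : B →L[ℝ] B) : ℝ :=
  sInf {r : ℝ | ∃ K : B →L[ℝ] B, IsCompactOperator ⇑K ∧ r = ‖T - K‖}

/-- The essential spectral radius, via Nussbaum's formula
ρ_ess(T) = inf_n ‖Tⁿ‖_K^{1/n}. -/
noncomputable def essSpectralRadius {B : Type*} [NormedAddCommGroup B] [NormedSpace ℝ B]
    (T : B →L[ℝ] B) : ℝ :=
  ⨅ n : ℕ, essNorm (T ^ (n+1)) ^ ((1:ℝ)/(n+1))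

section Aux

variable {B B' : Type*} [NormedAddCommGroup B] [NormedSpace ℝ B]
  [NormedAddCommGroup B'] [NormedSpace ℝ B']

lemma essSet_nonempty (T : B →L[ℝ] B) :
    {r : ℝ | ∃ K : B →L[ℝ] B, IsCompactOperator ⇑K ∧ r = ‖T - K‖}.Nonempty :=
  ⟨‖T - 0‖, 0, by simpa using isCompactOperator_zero, rfl⟩

lemma essSet_nonneg (T : B →L[ℝ] B) :
    ∀ r ∈ {r : ℝ | ∃ K : B →L[ℝ] B, IsCompactOperator ⇑K ∧ r = ‖T - K‖}, 0 ≤ r := by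
  rintro r ⟨K, hK, rfl⟩; exact norm_nonneg _

lemma essNorm_nonneg (T : B →L[ℝ] B) : 0 ≤ essNorm T :=
  Real.sInf_nonneg (essSet_nonneg T)

lemma essNorm_le (T : B →L[ℝ] B) {K : B →L[ℝ] B} (hK : IsCompactOperator ⇑K) :
    essNorm T ≤ ‖T - K‖ :=
  csInf_le ⟨0, fun r hr => essSet_nonneg T r hr⟩ ⟨K, hK, rfl⟩

lemma essNorm_le_norm (T : B →L[ℝ] B) : essNorm T ≤ ‖T‖ := by
  simpa using essNorm_le T (K := 0) (by simpa using isCompactOperator_zero)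

lemma le_mul_sInf {x c : ℝ} {S : Set ℝ} (hc : 0 ≤ c) (hne : S.Nonempty)
    (h : ∀ r ∈ S, x ≤ c * r) : x ≤ c * sInf S := by
  rcases eq_or_lt_of_le hc with rfl | hc'
  · obtain ⟨r, hr⟩ := hne
    simpa using (h r hr).trans (by simp)
  · have h1 : x / c ≤ sInf S :=
      le_csInf hne fun r hr => (div_le_iff₀' hc').mpr (h r hr)
    calc x = c * (x / c) := by field_simp
      _ ≤ c * sInf S := mul_le_mul_of_nonneg_left h1 hc

lemma isCompact_mul_left (S : B →L[ℝ] B) {K : B →L[ℝ] B} (hK : IsCompactOperator ⇑K) :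
    IsCompactOperator ⇑(S * K) :=
  hK.clm_comp S

lemma isCompact_mul_right {K : B →L[ℝ] B} (hK : IsCompactOperator ⇑K) (T : B →L[ℝ] B) :
    IsCompactOperator ⇑(K * T) :=
  hK.comp_clm T

lemma essNorm_mul_le (S T : B →L[ℝ] B) : essNorm (S * T) ≤ essNorm S * essNorm T := by
  apply le_mul_sInf (essNorm_nonneg S) (essSet_nonempty T)
  rintro r₂ ⟨K₂, hK₂, rfl⟩
  rw [mul_comm]
  apply le_mul_sInf (norm_nonneg _) (essSet_nonempty S)
  rintro r₁ ⟨K₁, hK₁, rfl⟩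
  have hKc : IsCompactOperator ⇑(K₁ * T + (S - K₁) * K₂) :=
    (isCompact_mul_right hK₁ T).add (isCompact_mul_left _ hK₂)
  calc essNorm (S * T) ≤ ‖S * T - (K₁ * T + (S - K₁) * K₂)‖ := essNorm_le _ hKc
    _ = ‖(S - K₁) * (T - K₂)‖ := by congr 1; noncomm_ring
    _ ≤ ‖S - K₁‖ * ‖T - K₂‖ := norm_mul_le _ _
    _ = ‖T - K₂‖ * ‖S - K₁‖ := mul_comm _ _

lemma essNorm_clm_mul_le (S T : B →L[ℝ] B) : essNorm (S * T) ≤ ‖S‖ * essNorm T := by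
  apply le_mul_sInf (norm_nonneg S) (essSet_nonempty T)
  rintro r ⟨K, hK, rfl⟩
  calc essNorm (S * T) ≤ ‖S * T - S * K‖ := essNorm_le _ (isCompact_mul_left S hK)
    _ = ‖S * (T - K)‖ := by rw [mul_sub]
    _ ≤ ‖S‖ * ‖T - K‖ := norm_mul_le _ _

lemma essNorm_conj_le (A : B' →L[ℝ] B) (A' : B →L[ℝ] B') (N : B' →L[ℝ] B') :
    essNorm (A.comp (N.comp A')) ≤ ‖A‖ * ‖A'‖ * essNorm N := by
  apply le_mul_sInf (by positivity) (essSet_nonempty N)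
  rintro r ⟨K, hK, rfl⟩
  have hKc : IsCompactOperator ⇑(A.comp (K.comp A')) := by
    have : ⇑(A.comp (K.comp A')) = ⇑A ∘ (⇑K ∘ ⇑A') := by ext x; simp
    rw [this]
    exact (hK.comp_clm A').clm_comp A
  calc essNorm (A.comp (N.comp A')) ≤ ‖A.comp (N.comp A') - A.comp (K.comp A')‖ :=
        essNorm_le _ hKc
    _ = ‖A.comp ((N - K).comp A')‖ := by congr 1; ext x; simp
    _ ≤ ‖A‖ * ‖(N - K).comp A'‖ := ContinuousLinearMap.opNorm_comp_le _ _
    _ ≤ ‖A‖ * (‖N - K‖ * ‖A'‖) :=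
        mul_le_mul_of_nonneg_left (ContinuousLinearMap.opNorm_comp_le _ _) (norm_nonneg _)
    _ = ‖A‖ * ‖A'‖ * ‖N - K‖ := by ring

lemma essNorm_one_le : essNorm (1 : B →L[ℝ] B) ≤ 1 :=
  (essNorm_le_norm 1).trans ContinuousLinearMap.norm_id_le

lemma essNorm_pow_le (T : B →L[ℝ] B) : ∀ k : ℕ, essNorm (T ^ k) ≤ essNorm T ^ k
  | 0 => by simpa using essNorm_one_le
  | (k+1) => by
      calc essNorm (T ^ (k+1)) = essNorm (T * T ^ k) := by rw [pow_succ']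
        _ ≤ essNorm T * essNorm (T ^ k) := essNorm_mul_le _ _
        _ ≤ essNorm T * essNorm T ^ k :=
            mul_le_mul_of_nonneg_left (essNorm_pow_le T k) (essNorm_nonneg T)
        _ = essNorm T ^ (k+1) := by rw [pow_succ']

end Aux

/- STATEMENT 19: If the powers of a bounded operator L on a Banach space B factor,
for all s ≥ 0, as L^{s+2t₀} = A ∘ M^s ∘ A' through a Banach space B' with M a bounded
operator of essential spectral radius ≤ ρ < 1, then ρ_ess(L^t) ≤ ρ^t for every t; in
particular ρ_ess(L) ≤ ρ. -/
set_option maxHeartbeats 1000000 in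
theorem stmt19 {B B' : Type*} [NormedAddCommGroup B] [NormedSpace ℝ B] [CompleteSpace B]
    [NormedAddCommGroup B'] [NormedSpace ℝ B'] [CompleteSpace B']
    (L : B →L[ℝ] B) (t₀ : ℕ)
    (A : B' →L[ℝ] B) (A' : B →L[ℝ] B') (M : B' →L[ℝ] B')
    (hfact : ∀ s : ℕ, L ^ (s + 2*t₀) = A.comp ((M ^ s).comp A'))
    (ρ : ℝ) (hρ0 : 0 ≤ ρ) (hρ1 : ρ < 1)
    (hM : essSpectralRadius M ≤ ρ) :
    (∀ t : ℕ, essSpectralRadius (L ^ t) ≤ ρ ^ t) ∧ essSpectralRadius L ≤ ρ := by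
  have hE_le : ∀ (T : B →L[ℝ] B) (n : ℕ),
      essSpectralRadius T ≤ essNorm (T ^ (n+1)) ^ ((1:ℝ)/(n+1)) := by
    intro T n
    apply ciInf_le
    refine ⟨0, ?_⟩
    rintro x ⟨k, rfl⟩
    exact Real.rpow_nonneg (essNorm_nonneg _) _
  have main : ∀ t : ℕ, essSpectralRadius (L ^ t) ≤ ρ ^ t := by
    intro t
    rcases Nat.eq_zero_or_pos t with rfl | ht
    · simp only [pow_zero]
      calc essSpectralRadius (1 : B →L[ℝ] B)
          ≤ essNorm ((1 : B →L[ℝ] B) ^ (0+1)) ^ ((1:ℝ)/(0+1)) := by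
            exact_mod_cast hE_le 1 0
        _ = essNorm (1 : B →L[ℝ] B) := by norm_num
        _ ≤ 1 := essNorm_one_le
    · refine le_of_forall_pos_le_add ?_
      intro ε hε
      -- choose r ∈ (ρ, 1) with r ^ t < ρ ^ t + ε
      obtain ⟨r, hrρ, hr1, hrt⟩ : ∃ r, ρ < r ∧ (r < 1 ∧ r ^ t < ρ ^ t + ε) := by
        have h1 : ∀ᶠ x in nhdsWithin ρ (Set.Ioi ρ), x ^ t < ρ ^ t + ε :=
          (((continuous_pow t).tendsto ρ).mono_left nhdsWithin_le_nhds).eventually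
            (eventually_lt_nhds (by linarith))
        have h2 : ∀ᶠ x in nhdsWithin ρ (Set.Ioi ρ), x < 1 :=
          (eventually_lt_nhds hρ1).filter_mono nhdsWithin_le_nhds
        have h3 : ∀ᶠ x in nhdsWithin ρ (Set.Ioi ρ), ρ < x :=
          eventually_mem_nhdsWithin
        exact (h3.and (h2.and h1)).exists
      have hr0 : 0 < r := lt_of_le_of_lt hρ0 hrρ
      -- find m with essNorm (M^(m+1)) < r^(m+1)
      have hMr : essSpectralRadius M < r := lt_of_le_of_lt hM hrρ
      rw [essSpectralRadius] at hMr
      obtain ⟨m, hm⟩ := exists_lt_of_ciInf_lt hMr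
      set b : ℝ := essNorm (M ^ (m+1)) with hb_def
      have hb0 : 0 ≤ b := essNorm_nonneg _
      have hb : b < r ^ (m+1) := by
        have h' : (b ^ ((1:ℝ)/(m+1))) ^ (m+1) < r ^ (m+1) :=
          pow_lt_pow_left₀ hm (Real.rpow_nonneg hb0 _) (Nat.succ_ne_zero m)
        rwa [show ((1:ℝ)/(m+1)) = (((m+1 : ℕ) : ℝ))⁻¹ by push_cast; ring,
          Real.rpow_inv_natCast_pow hb0 (Nat.succ_ne_zero m)] at h'
      -- the constant
      set CL : ℝ := max 1 ‖L‖ ^ m with hCL_def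
      have hLj : ∀ j ≤ m, ‖L ^ j‖ ≤ CL := by
        intro j hj
        have step1 : ‖L ^ j‖ ≤ max 1 ‖L‖ ^ j := by
          rcases Nat.eq_zero_or_pos j with rfl | hj0
          · simp only [pow_zero]
            exact ContinuousLinearMap.norm_id_le.trans (by simp)
          · exact (norm_pow_le' L hj0).trans
              (pow_le_pow_left₀ (norm_nonneg L) (le_max_right 1 ‖L‖) j)
        exact step1.trans (pow_le_pow_right₀ (le_max_left 1 ‖L‖) hj)
      set C : ℝ := CL * (‖A‖ * ‖A'‖) / r ^ (2*t₀ + m) with hC_def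
      set C1 : ℝ := max 1 C with hC1_def
      have hC1one : (1:ℝ) ≤ C1 := le_max_left _ _
      have hC10 : (0:ℝ) < C1 := lt_of_lt_of_le one_pos hC1one
      -- key estimate
      have key : ∀ n : ℕ, 2*t₀ + m ≤ t*(n+1) →
          essNorm (L ^ (t*(n+1))) ≤ C1 * r ^ (t*(n+1)) := by
        intro n hn
        set q := t*(n+1) with hq_def
        set s := q - 2*t₀ with hs_def
        have hs : s + 2*t₀ = q := by omega
        set k := s / (m+1) with hk_def
        set j := s % (m+1) with hj_def
        have hdiv : (m+1) * k + j = s := Nat.div_add_mod s (m+1)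
        have hjm : j ≤ m := by
          have := Nat.mod_lt s (y := m+1) (by omega)
          omega
        have hsplit : L ^ q = L ^ j * L ^ ((m+1)*k + 2*t₀) := by
          rw [← pow_add]
          congr 1
          omega
        have hexp : q - (2*t₀ + m) ≤ (m+1)*k := by omega
        have h2q : 2*t₀ + m ≤ q := hn
        calc essNorm (L ^ q) = essNorm (L ^ j * L ^ ((m+1)*k + 2*t₀)) := by rw [hsplit]
          _ ≤ ‖L ^ j‖ * essNorm (L ^ ((m+1)*k + 2*t₀)) := essNorm_clm_mul_le _ _
          _ = ‖L ^ j‖ * essNorm (A.comp ((M ^ ((m+1)*k)).comp A')) := by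
              rw [hfact ((m+1)*k)]
          _ ≤ ‖L ^ j‖ * (‖A‖ * ‖A'‖ * essNorm (M ^ ((m+1)*k))) :=
              mul_le_mul_of_nonneg_left (essNorm_conj_le A A' _) (norm_nonneg _)
          _ ≤ CL * (‖A‖ * ‖A'‖ * essNorm (M ^ ((m+1)*k))) := by
              apply mul_le_mul_of_nonneg_right (hLj j hjm)
              exact mul_nonneg (mul_nonneg (norm_nonneg _) (norm_nonneg _)) (essNorm_nonneg _)
          _ ≤ CL * (‖A‖ * ‖A'‖ * b ^ k) := by
              apply mul_le_mul_of_nonneg_left _ (by positivity)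
              apply mul_le_mul_of_nonneg_left _ (by positivity)
              calc essNorm (M ^ ((m+1)*k)) = essNorm ((M ^ (m+1)) ^ k) := by rw [← pow_mul]
                _ ≤ b ^ k := essNorm_pow_le _ k
          _ ≤ CL * (‖A‖ * ‖A'‖ * r ^ ((m+1)*k)) := by
              apply mul_le_mul_of_nonneg_left _ (by positivity)
              apply mul_le_mul_of_nonneg_left _ (by positivity)
              rw [pow_mul]
              exact pow_le_pow_left₀ hb0 hb.le k
          _ ≤ CL * (‖A‖ * ‖A'‖ * r ^ (q - (2*t₀ + m))) := by
              apply mul_le_mul_of_nonneg_left _ (by positivity)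
              apply mul_le_mul_of_nonneg_left _ (by positivity)
              exact pow_le_pow_of_le_one hr0.le hr1.le hexp
          _ = C * r ^ q := by
              have hrq : r ^ (q - (2*t₀ + m)) = r ^ q / r ^ (2*t₀ + m) := by
                rw [eq_div_iff (by positivity), ← pow_add]
                congr 1
                omega
              rw [hC_def, hrq]
              ring
          _ ≤ C1 * r ^ q := by
              apply mul_le_mul_of_nonneg_right (le_max_right 1 C)
              positivity
      -- eventually bound on the infimum terms
      have hev : ∀ᶠ n : ℕ in Filter.atTop,
          essSpectralRadius (L ^ t) ≤ C1 ^ ((1:ℝ)/(n+1)) * r ^ t := by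
        rw [Filter.eventually_atTop]
        refine ⟨2*t₀ + m, fun n hn => ?_⟩
        have hq : 2*t₀ + m ≤ t*(n+1) := by
          have h1 : n + 1 ≤ t * (n+1) := Nat.le_mul_of_pos_left _ ht
          omega
        have hLpow : (L ^ t) ^ (n+1) = L ^ (t*(n+1)) := by rw [← pow_mul]
        calc essSpectralRadius (L ^ t)
            ≤ essNorm ((L ^ t) ^ (n+1)) ^ ((1:ℝ)/(n+1)) := hE_le (L ^ t) n
          _ = essNorm (L ^ (t*(n+1))) ^ ((1:ℝ)/(n+1)) := by rw [hLpow]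
          _ ≤ (C1 * r ^ (t*(n+1))) ^ ((1:ℝ)/(n+1)) :=
              Real.rpow_le_rpow (essNorm_nonneg _) (key n hq) (by positivity)
          _ = C1 ^ ((1:ℝ)/(n+1)) * (r ^ (t*(n+1))) ^ ((1:ℝ)/(n+1)) :=
              Real.mul_rpow hC10.le (by positivity)
          _ = C1 ^ ((1:ℝ)/(n+1)) * r ^ t := by
              congr 1
              rw [pow_mul, show ((1:ℝ)/(n+1)) = (((n+1 : ℕ) : ℝ))⁻¹ by push_cast; ring,
                Real.pow_rpow_inv_natCast (by positivity) (Nat.succ_ne_zero n)]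
      -- pass to the limit
      have hlim : Filter.Tendsto (fun n : ℕ => C1 ^ ((1:ℝ)/(n+1)) * r ^ t)
          Filter.atTop (nhds (1 * r ^ t)) := by
        have h0 : Filter.Tendsto (fun n : ℕ => (1:ℝ)/(n+1)) Filter.atTop (nhds 0) :=
          tendsto_one_div_add_atTop_nhds_zero_nat
        have hc : Filter.Tendsto (fun n : ℕ => C1 ^ ((1:ℝ)/(n+1))) Filter.atTop
            (nhds 1) := by
          have := (Real.continuousAt_const_rpow (ne_of_gt hC10)).tendsto.comp h0
          simpa [Real.rpow_zero, Function.comp_def] using this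
        exact hc.mul_const (r ^ t)
      have hfin : essSpectralRadius (L ^ t) ≤ 1 * r ^ t := ge_of_tendsto hlim hev
      rw [one_mul] at hfin
      exact hfin.trans hrt.le
  refine ⟨main, ?_⟩
  have h1 := main 1
  simpa using h1
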